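/- (Weighted Mikljukov–Hwang–Collin–Krust inequality.) Let V be a real inner product space, ρ > 0 a real number, and for a vector a ∈ V write φ(a) = a/√(ρ⁻² + |a|²). Then for all a, b ∈ V: ⟨φ(a) − φ(b), a − b⟩ ≥ ½(√(ρ⁻² + |a|²) + √(ρ⁻² + |b|²))·|φ(a) − φ(b)|² ≥ ρ⁻¹·|φ(a) − φ(b)|². -/

import Mathlib

open scoped RealInnerProductSpace

set_option maxHeartbeats 1600000 in
/-- Weighted Mikljukov–Hwang–Collin–Krust inequality. -/
theorem stmt_1 {V : Type*} [NormedAddCommGroup V] [InnerProductSpace ℝ V]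
    (ρ : ℝ) (hρ : 0 < ρ) (a b : V) :
    let φ : V → V := fun x => (Real.sqrt (ρ⁻¹ ^ 2 + ‖x‖ ^ 2))⁻¹ • x
    (1 / 2) * (Real.sqrt (ρ⁻¹ ^ 2 + ‖a‖ ^ 2) + Real.sqrt (ρ⁻¹ ^ 2 + ‖b‖ ^ 2))
        * ‖φ a - φ b‖ ^ 2 ≤ ⟪φ a - φ b, a - b⟫ ∧
    ρ⁻¹ * ‖φ a - φ b‖ ^ 2
      ≤ (1 / 2) * (Real.sqrt (ρ⁻¹ ^ 2 + ‖a‖ ^ 2) + Real.sqrt (ρ⁻¹ ^ 2 + ‖b‖ ^ 2))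
        * ‖φ a - φ b‖ ^ 2 := by
  intro φ
  have hρi : 0 < ρ⁻¹ := inv_pos.mpr hρ
  set wa := Real.sqrt (ρ⁻¹ ^ 2 + ‖a‖ ^ 2) with hwa
  set wb := Real.sqrt (ρ⁻¹ ^ 2 + ‖b‖ ^ 2) with hwb
  have hwa0 : 0 < wa := Real.sqrt_pos.mpr (by positivity)
  have hwb0 : 0 < wb := Real.sqrt_pos.mpr (by positivity)
  have hwa2 : wa ^ 2 = ρ⁻¹ ^ 2 + ‖a‖ ^ 2 := Real.sq_sqrt (by positivity)
  have hwb2 : wb ^ 2 = ρ⁻¹ ^ 2 + ‖b‖ ^ 2 := Real.sq_sqrt (by positivity)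
  have hwaρ : ρ⁻¹ ≤ wa := by nlinarith [sq_nonneg ‖a‖, sq_nonneg (wa - ρ⁻¹)]
  have hwbρ : ρ⁻¹ ≤ wb := by nlinarith [sq_nonneg ‖b‖, sq_nonneg (wb - ρ⁻¹)]
  have hnorm : ‖φ a - φ b‖ ^ 2
      = wa⁻¹ ^ 2 * ‖a‖ ^ 2 - 2 * (wa⁻¹ * wb⁻¹) * ⟪a, b⟫ + wb⁻¹ ^ 2 * ‖b‖ ^ 2 := by
    rw [@norm_sub_sq_real]
    simp only [φ, norm_smul, real_inner_smul_left, real_inner_smul_right,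
      Real.norm_eq_abs, abs_of_pos (inv_pos.mpr hwa0), abs_of_pos (inv_pos.mpr hwb0)]
    rw [← hwa, ← hwb, abs_of_pos (inv_pos.mpr hwa0), abs_of_pos (inv_pos.mpr hwb0)]
    ring
  have hinner : ⟪φ a - φ b, a - b⟫
      = wa⁻¹ * ‖a‖ ^ 2 - (wa⁻¹ + wb⁻¹) * ⟪a, b⟫ + wb⁻¹ * ‖b‖ ^ 2 := by
    simp only [φ, inner_sub_left, inner_sub_right, real_inner_smul_left,
      real_inner_self_eq_norm_sq, real_inner_comm a b]
    ring
  constructor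
  · rw [hnorm, hinner]
    have hA : ‖a‖ ^ 2 = wa ^ 2 - ρ⁻¹ ^ 2 := by linarith
    have hB : ‖b‖ ^ 2 = wb ^ 2 - ρ⁻¹ ^ 2 := by linarith
    rw [hA, hB]
    have key : 0 ≤ (1/2) * ρ⁻¹ ^ 2 * (wa - wb) ^ 2 * (wa + wb) * (wa⁻¹ * wb⁻¹) ^ 2 := by
      positivity
    have hdiff : (wa⁻¹ * (wa ^ 2 - ρ⁻¹ ^ 2) - (wa⁻¹ + wb⁻¹) * ⟪a, b⟫
          + wb⁻¹ * (wb ^ 2 - ρ⁻¹ ^ 2))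
        - (1/2) * (wa + wb) * (wa⁻¹ ^ 2 * (wa ^ 2 - ρ⁻¹ ^ 2)
          - 2 * (wa⁻¹ * wb⁻¹) * ⟪a, b⟫ + wb⁻¹ ^ 2 * (wb ^ 2 - ρ⁻¹ ^ 2))
        = (1/2) * ρ⁻¹ ^ 2 * (wa - wb) ^ 2 * (wa + wb) * (wa⁻¹ * wb⁻¹) ^ 2 := by
      field_simp
      ring
    nlinarith [key, hdiff]
  · nlinarith [sq_nonneg ‖φ a - φ b‖, hwaρ, hwbρ]
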